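/- The density of the smoothed octagon: let a = 12^{1/4}/√(4 − √2), k = √3/(2a²), t₀ = −1/√2, t₁ = −1/2, and I = a²·((1−k)·(1/t₀ − 1/t₁) + (t₁ − t₀) − (1−k)·ln(t₀/t₁)). Then 8·I/√12 = (8 − √32 − ln 2)/(√8 − 1). -/

import Mathlib

/-- The density of the smoothed octagon: with square-representation parameters
`a = 12^(1/4)/√(4 - √2)`, `k = √3/(2a²)`, `t₀ = -1/√2`, `t₁ = -1/2`, and link
area `I = a²((1-k)(1/t₀ - 1/t₁) + (t₁ - t₀) - (1-k)·ln(t₀/t₁))`, the density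
`8I/√12` equals `(8 - √32 - ln 2)/(√8 - 1)`. -/
theorem smoothed_octagon_density (a k t₀ t₁ I : ℝ)
    (ha : a = (12 : ℝ) ^ ((1 : ℝ) / 4) / Real.sqrt (4 - Real.sqrt 2))
    (hk : k = Real.sqrt 3 / (2 * a ^ 2))
    (ht₀ : t₀ = -(1 / Real.sqrt 2)) (ht₁ : t₁ = -(1 / 2))
    (hI : I = a ^ 2 * ((1 - k) * (1 / t₀ - 1 / t₁) + (t₁ - t₀) -
      (1 - k) * Real.log (t₀ / t₁))) :
    8 * I / Real.sqrt 12 = (8 - Real.sqrt 32 - Real.log 2) / (Real.sqrt 8 - 1) := by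
  have h2 : Real.sqrt 2 ^ 2 = 2 := Real.sq_sqrt (by norm_num)
  have h3 : Real.sqrt 3 ^ 2 = 3 := Real.sq_sqrt (by norm_num)
  have h2pos : (0:ℝ) < Real.sqrt 2 := Real.sqrt_pos.mpr (by norm_num)
  have h3pos : (0:ℝ) < Real.sqrt 3 := Real.sqrt_pos.mpr (by norm_num)
  have h2lt : Real.sqrt 2 < 2 := by nlinarith
  have h2gt : 1 < Real.sqrt 2 := by nlinarith
  have h12 : Real.sqrt 12 = 2 * Real.sqrt 3 := by
    rw [show (12:ℝ) = 2^2 * 3 by norm_num, Real.sqrt_mul (by positivity),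
      Real.sqrt_sq (by norm_num)]
  have h32 : Real.sqrt 32 = 4 * Real.sqrt 2 := by
    rw [show (32:ℝ) = 4^2 * 2 by norm_num, Real.sqrt_mul (by positivity),
      Real.sqrt_sq (by norm_num)]
  have h8 : Real.sqrt 8 = 2 * Real.sqrt 2 := by
    rw [show (8:ℝ) = 2^2 * 2 by norm_num, Real.sqrt_mul (by positivity),
      Real.sqrt_sq (by norm_num)]
  have ha2 : a ^ 2 = 2 * Real.sqrt 3 / (4 - Real.sqrt 2) := by
    rw [ha, div_pow, ← Real.rpow_natCast ((12:ℝ) ^ ((1:ℝ)/4)) 2,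
      ← Real.rpow_mul (by norm_num)]
    norm_num
    rw [← Real.sqrt_eq_rpow, Real.sq_sqrt (by nlinarith), h12]
  have hlog : Real.log (t₀ / t₁) = Real.log 2 / 2 := by
    rw [ht₀, ht₁, show -(1 / Real.sqrt 2) / -((1:ℝ)/2) = Real.sqrt 2 by
      rw [neg_div_neg_eq]; field_simp; exact h2.symm]
    exact Real.log_sqrt (by norm_num)
  have hd : (4:ℝ) - Real.sqrt 2 ≠ 0 := by nlinarith
  have hd2 : (2:ℝ) * Real.sqrt 2 - 1 ≠ 0 := by nlinarith
  rw [hI, hk, ha2, hlog, ht₀, ht₁, h12, h32, h8]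
  have h2ne : Real.sqrt 2 ≠ 0 := ne_of_gt h2pos
  have h3ne : Real.sqrt 3 ≠ 0 := ne_of_gt h3pos
  field_simp
  linear_combination ((8:ℝ) * (-4 * Real.sqrt 2 ^ 2 + 4 + 6 * Real.sqrt 2 - 2 * Real.sqrt 2 * Real.log 2)) * h2
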